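/- For all integers k ≥ 1 and n with n > 2k, the trinomial coefficient satisfies n!/(k!·k!·(n−2k)!) ≥ 2^{2k}·2^{n·H((n−2k)/n)} / (8·k·√((n−2k)/n)), where H is the binary entropy function. -/

import Mathlib

/-- The binary entropy function `H(p) = -p log₂ p - (1-p) log₂ (1-p)`
(with `H(0) = H(1) = 0`, using the convention `logb 2 0 = 0`). -/
noncomputable def binEntropy (p : ℝ) : ℝ :=
  -(p * Real.logb 2 p) - (1 - p) * Real.logb 2 (1 - p)

open Filter

lemma sqrtpi_le_stirlingSeq (n : ℕ) (hn : 1 ≤ n) : Real.sqrt Real.pi ≤ Stirling.stirlingSeq n := by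
  obtain ⟨j, rfl⟩ := Nat.exists_eq_add_of_le hn
  have h := Stirling.stirlingSeq'_antitone.le_of_tendsto
    (Stirling.tendsto_stirlingSeq_sqrt_pi.comp (tendsto_add_atTop_nat 1)) j
  simpa [Function.comp, Nat.add_comm] using h

lemma stirling_lower (n : ℕ) (hn : 1 ≤ n) :
    Real.sqrt Real.pi * (Real.sqrt (2 * n) * ((n : ℝ) / Real.exp 1) ^ n) ≤ n.factorial := by
  have h := sqrtpi_le_stirlingSeq n hn
  have hd : 0 < Real.sqrt (2 * n) * ((n : ℝ) / Real.exp 1) ^ n := by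
    have : (0:ℝ) < n := by exact_mod_cast hn
    positivity
  rw [Stirling.stirlingSeq, le_div_iff₀ hd] at h
  linarith

lemma stirling_upper (n j : ℕ) (hj : 1 ≤ j) (hjn : j ≤ n) :
    (n.factorial : ℝ) ≤ Stirling.stirlingSeq j * (Real.sqrt (2 * n) * ((n : ℝ) / Real.exp 1) ^ n) := by
  have h : Stirling.stirlingSeq n ≤ Stirling.stirlingSeq j := by
    obtain ⟨a, rfl⟩ := Nat.exists_eq_add_of_le hj
    obtain ⟨b, rfl⟩ := Nat.exists_eq_add_of_le hjn
    have := Stirling.stirlingSeq'_antitone (Nat.le_add_right a b)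
    simp only [Function.comp] at this
    have e1 : 1 + a + b = a + b + 1 := by omega
    have e2 : 1 + a = a + 1 := by omega
    rw [e1, e2]
    exact this
  have hd : 0 < Real.sqrt (2 * n) * ((n : ℝ) / Real.exp 1) ^ n := by
    have : (0:ℝ) < n := by exact_mod_cast hj.trans hjn
    positivity
  rw [Stirling.stirlingSeq, div_le_iff₀ hd] at h
  linarith

lemma stirling_combo (n k m : ℕ) (ck cm : ℝ) (hk : 1 ≤ k) (hm : 1 ≤ m) (hn : n = 2 * k + m)
    (hck0 : 0 < ck) (hcm0 : 0 < cm)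
    (hck : (k.factorial : ℝ) ≤ ck * (Real.sqrt (2 * k) * ((k : ℝ) / Real.exp 1) ^ k))
    (hcm : (m.factorial : ℝ) ≤ cm * (Real.sqrt (2 * m) * ((m : ℝ) / Real.exp 1) ^ m))
    (hc : ck ^ 2 * cm ≤ 4 * Real.sqrt Real.pi) :
    (n.factorial : ℝ) / ((k.factorial : ℝ) * k.factorial * m.factorial) ≥
      (n : ℝ) ^ n / ((m : ℝ) ^ m * (k : ℝ) ^ (2 * k)) * Real.sqrt ((n : ℝ) / m) / (8 * k) := by
  subst hn
  have hK : (0:ℝ) < k := by exact_mod_cast hk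
  have hM : (0:ℝ) < m := by exact_mod_cast hm
  have hN : (0:ℝ) < ((2*k+m : ℕ) : ℝ) := by positivity
  have he : (0:ℝ) < Real.exp 1 := Real.exp_pos 1
  have hfk : (0:ℝ) < (k.factorial : ℝ) := by exact_mod_cast k.factorial_pos
  have hfm : (0:ℝ) < (m.factorial : ℝ) := by exact_mod_cast m.factorial_pos
  have hfn := stirling_lower (2*k+m) (by omega)
  -- denominator bound
  have hD : (k.factorial : ℝ) * k.factorial * m.factorial ≤
      ck ^ 2 * cm * (2 * (k:ℝ) * Real.sqrt (2 * m) * (((k:ℝ) / Real.exp 1) ^ k) ^ 2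
        * ((m:ℝ) / Real.exp 1) ^ m) := by
    have h1 : (k.factorial : ℝ) * k.factorial ≤
        (ck * (Real.sqrt (2 * k) * ((k : ℝ) / Real.exp 1) ^ k)) ^ 2 := by
      rw [sq]
      exact mul_le_mul hck hck hfk.le (by positivity)
    have h2 := mul_le_mul h1 hcm hfm.le (by positivity)
    have hs : Real.sqrt (2 * (k:ℝ)) ^ 2 = 2 * k := Real.sq_sqrt (by positivity)
    calc (k.factorial : ℝ) * k.factorial * m.factorial
        ≤ (ck * (Real.sqrt (2 * k) * ((k : ℝ) / Real.exp 1) ^ k)) ^ 2 *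
          (cm * (Real.sqrt (2 * m) * ((m:ℝ) / Real.exp 1) ^ m)) := h2
      _ = ck ^ 2 * cm * (2 * (k:ℝ) * Real.sqrt (2 * m) * (((k:ℝ) / Real.exp 1) ^ k) ^ 2
          * ((m:ℝ) / Real.exp 1) ^ m) := by
          rw [mul_pow, mul_pow, hs]; ring
  have hI1 : Real.sqrt (((2*k+m : ℕ) : ℝ) / m) * Real.sqrt (2 * m)
      = Real.sqrt (2 * ((2*k+m : ℕ) : ℝ)) := by
    rw [← Real.sqrt_mul (by positivity)]
    congr 1
    field_simp
  have hexp : Real.exp ((k:ℝ) * 2 + (m:ℝ)) = Real.exp (k:ℝ) ^ 2 * Real.exp (m:ℝ) := by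
    rw [show ((k:ℝ) * 2 + (m:ℝ)) = (k:ℝ) + (k:ℝ) + (m:ℝ) by ring, Real.exp_add, Real.exp_add]
    ring
  have hI2 : ((2*k+m : ℕ):ℝ) ^ (2*k+m) * ((((k:ℝ) / Real.exp 1) ^ k) ^ 2
      * ((m:ℝ) / Real.exp 1) ^ m) / ((m : ℝ) ^ m * (k : ℝ) ^ (2 * k))
      = (((2*k+m : ℕ):ℝ) / Real.exp 1) ^ (2*k+m) := by
    field_simp
    simp only [sq, ← Real.exp_add]
    ring_nf
  rw [ge_iff_le, div_le_div_iff₀ (by positivity) (by positivity)]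
  have hDpos : (0:ℝ) < ck ^ 2 * cm * (2 * (k:ℝ) * Real.sqrt (2 * m)
      * (((k:ℝ) / Real.exp 1) ^ k) ^ 2 * ((m:ℝ) / Real.exp 1) ^ m) := by positivity
  calc ((2*k+m : ℕ):ℝ) ^ (2*k+m) / ((m : ℝ) ^ m * (k : ℝ) ^ (2 * k))
        * Real.sqrt (((2*k+m : ℕ):ℝ) / m) * ((k.factorial : ℝ) * k.factorial * m.factorial)
      ≤ ((2*k+m : ℕ):ℝ) ^ (2*k+m) / ((m : ℝ) ^ m * (k : ℝ) ^ (2 * k))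
        * Real.sqrt (((2*k+m : ℕ):ℝ) / m) *
        (ck ^ 2 * cm * (2 * (k:ℝ) * Real.sqrt (2 * m) * (((k:ℝ) / Real.exp 1) ^ k) ^ 2
          * ((m:ℝ) / Real.exp 1) ^ m)) := by
        apply mul_le_mul_of_nonneg_left hD (by positivity)
    _ = ck ^ 2 * cm * (2 * (k:ℝ) * (Real.sqrt (2 * ((2*k+m : ℕ):ℝ))
          * (((2*k+m : ℕ):ℝ) / Real.exp 1) ^ (2*k+m))) := by
        rw [← hI1, ← hI2]
        field_simp
    _ ≤ 4 * Real.sqrt Real.pi * (2 * (k:ℝ) * (Real.sqrt (2 * ((2*k+m : ℕ):ℝ))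
          * (((2*k+m : ℕ):ℝ) / Real.exp 1) ^ (2*k+m))) := by
        apply mul_le_mul_of_nonneg_right hc (by positivity)
    _ = (Real.sqrt Real.pi * (Real.sqrt (2 * ((2*k+m : ℕ):ℝ))
          * (((2*k+m : ℕ):ℝ) / Real.exp 1) ^ (2*k+m))) * (8 * (k:ℝ)) := by ring
    _ ≤ ((2*k+m).factorial : ℝ) * (8 * (k:ℝ)) := by
        apply mul_le_mul_of_nonneg_right hfn (by positivity)

lemma stirlingSeq_two : Stirling.stirlingSeq 2 = Real.exp 1 ^ 2 / 4 := by
  have h4 : Real.sqrt (2 * ((2:ℕ):ℝ)) = 2 := by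
    rw [show (2 * ((2:ℕ):ℝ)) = 2 ^ 2 by norm_num, Real.sqrt_sq (by norm_num)]
  rw [Stirling.stirlingSeq, h4]
  rw [Nat.factorial]
  push_cast
  rw [div_pow]
  field_simp
  ring

lemma main_ineq (n k m : ℕ) (hk : 1 ≤ k) (hm : 1 ≤ m) (hn : n = 2 * k + m) :
    (n.factorial : ℝ) / ((k.factorial : ℝ) * k.factorial * m.factorial) ≥
      (n : ℝ) ^ n / ((m : ℝ) ^ m * (k : ℝ) ^ (2 * k)) * Real.sqrt ((n : ℝ) / m) / (8 * k) := by
  have he0 : (0:ℝ) < Real.exp 1 := Real.exp_pos 1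
  have he1 : Real.exp 1 ≤ 2.7182818286 := Real.exp_one_lt_d9.le
  have he2 : Real.exp 1 ^ 2 ≤ 7.39 := by nlinarith
  have he4 : Real.exp 1 ^ 4 ≤ 54.7 := by nlinarith
  have he5 : Real.exp 1 ^ 5 ≤ 148.7 := by nlinarith
  have hs2 : (1.414:ℝ) ≤ Real.sqrt 2 := by
    nlinarith [Real.sq_sqrt (show (0:ℝ) ≤ 2 by norm_num), Real.sqrt_nonneg 2]
  have hs2pos : (0:ℝ) < Real.sqrt 2 := by positivity
  have hspi : (1.772:ℝ) ≤ Real.sqrt Real.pi := by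
    nlinarith [Real.sq_sqrt Real.pi_nonneg, Real.sqrt_nonneg Real.pi, Real.pi_gt_d6]
  have hck1pos : (0:ℝ) < Real.exp 1 / Real.sqrt 2 := by positivity
  have hck2pos : (0:ℝ) < Real.exp 1 ^ 2 / 4 := by positivity
  have hcA : (Real.exp 1 ^ 2 / 4) ^ 2 * (Real.exp 1 / Real.sqrt 2) ≤ 4 * Real.sqrt Real.pi := by
    have heq : (Real.exp 1 ^ 2 / 4) ^ 2 * (Real.exp 1 / Real.sqrt 2)
        = Real.exp 1 ^ 5 / (16 * Real.sqrt 2) := by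
      field_simp
      norm_num
    rw [heq, div_le_iff₀ (by positivity)]
    nlinarith [mul_le_mul hs2 hspi (by norm_num) hs2pos.le]
  have hcB : (Real.exp 1 / Real.sqrt 2) ^ 2 * (Real.exp 1 ^ 2 / 4) ≤ 4 * Real.sqrt Real.pi := by
    have heq : (Real.exp 1 / Real.sqrt 2) ^ 2 = Real.exp 1 ^ 2 / 2 := by
      rw [div_pow, Real.sq_sqrt (by norm_num : (0:ℝ) ≤ 2)]
    rw [heq]
    nlinarith
  have hup1 : ∀ j : ℕ, 1 ≤ j → (j.factorial : ℝ) ≤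
      (Real.exp 1 / Real.sqrt 2) * (Real.sqrt (2 * j) * ((j : ℝ) / Real.exp 1) ^ j) := by
    intro j hj
    have := stirling_upper j 1 le_rfl hj
    rwa [Stirling.stirlingSeq_one] at this
  have hup2 : ∀ j : ℕ, 2 ≤ j → (j.factorial : ℝ) ≤
      (Real.exp 1 ^ 2 / 4) * (Real.sqrt (2 * j) * ((j : ℝ) / Real.exp 1) ^ j) := by
    intro j hj
    have := stirling_upper j 2 (by norm_num) hj
    rwa [stirlingSeq_two] at this
  by_cases hk2 : 2 ≤ k
  · exact stirling_combo n k m (Real.exp 1 ^ 2 / 4) (Real.exp 1 / Real.sqrt 2) hk hm hn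
      hck2pos hck1pos (hup2 k hk2) (hup1 m hm) hcA
  · have hk1 : k = 1 := by omega
    subst hk1
    by_cases hm2 : 2 ≤ m
    · exact stirling_combo n 1 m (Real.exp 1 / Real.sqrt 2) (Real.exp 1 ^ 2 / 4) hk hm hn
        hck1pos hck2pos (hup1 1 le_rfl) (hup2 m hm2) hcB
    · have hm1 : m = 1 := by omega
      subst hm1
      subst hn
      norm_num [Nat.factorial]
      nlinarith [Real.sq_sqrt (show (0:ℝ) ≤ 3 by norm_num), Real.sqrt_nonneg 3]

lemma rpow_neg_logb (x : ℝ) (hx : 0 < x) (j : ℕ) :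
    (2:ℝ) ^ (-((j:ℝ) * Real.logb 2 x)) = (x⁻¹) ^ j := by
  have h : (2:ℝ) ^ (-((j:ℝ) * Real.logb 2 x)) = ((2:ℝ) ^ (Real.logb 2 x)) ^ (-(j:ℝ)) := by
    rw [← Real.rpow_mul (by norm_num : (0:ℝ) ≤ 2)]
    congr 1
    ring
  rw [h, Real.rpow_logb (by norm_num) (by norm_num) hx, Real.rpow_neg hx.le,
    ← Real.rpow_natCast x⁻¹ j, Real.inv_rpow hx.le]

/-- For `k ≥ 1` and `n > 2k`, the trinomial coefficient satisfies
`n!/(k!·k!·(n-2k)!) ≥ 2^{2k}·2^{n·H((n-2k)/n)}/(8k·√((n-2k)/n))`. -/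
theorem trinomial_lower_bound (n k : ℕ) (hk : 1 ≤ k) (hn : 2 * k < n) :
    (n.factorial : ℝ) / ((k.factorial : ℝ) * k.factorial * (n - 2 * k).factorial) ≥
      (2 : ℝ) ^ (2 * k) *
        (2 : ℝ) ^ ((n : ℝ) * binEntropy (((n : ℝ) - 2 * k) / n)) /
          (8 * k * Real.sqrt (((n : ℝ) - 2 * k) / n)) := by
  set m : ℕ := n - 2 * k with hm_def
  have hm : 1 ≤ m := by omega
  have hn2 : n = 2 * k + m := by omega
  have hmc : ((n : ℝ) - 2 * k) = (m : ℝ) := by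
    rw [hm_def]
    push_cast [Nat.cast_sub hn.le]
    ring
  have hN : (0:ℝ) < (n : ℝ) := by exact_mod_cast (by omega : 0 < n)
  have hM : (0:ℝ) < (m : ℝ) := by exact_mod_cast hm
  have hK : (0:ℝ) < (k : ℝ) := by exact_mod_cast hk
  rw [hmc]
  have h1p : 1 - (m:ℝ)/n = ((2*k : ℕ):ℝ)/n := by
    rw [← hmc]
    push_cast
    field_simp
    ring
  have hE : (n:ℝ) * binEntropy ((m:ℝ)/n) =
      -(((m:ℕ):ℝ) * Real.logb 2 (((m:ℕ):ℝ)/n)) +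
        -((((2*k : ℕ)):ℝ) * Real.logb 2 ((((2*k : ℕ)):ℝ)/n)) := by
    simp only [binEntropy, h1p]
    field_simp
    ring
  have hpow : (2:ℝ) ^ ((n:ℝ) * binEntropy ((m:ℝ)/n)) =
      (((m:ℝ)/n)⁻¹) ^ m * (((((2*k : ℕ)):ℝ)/n)⁻¹) ^ (2*k) := by
    rw [hE, Real.rpow_add (by norm_num : (0:ℝ) < 2),
      rpow_neg_logb _ (by positivity) m, rpow_neg_logb _ (by positivity) (2*k)]
  have hsr : Real.sqrt ((m:ℝ)/n) = (Real.sqrt ((n:ℝ)/m))⁻¹ := by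
    rw [← Real.sqrt_inv, inv_div]
  have hsn : (0:ℝ) < Real.sqrt ((n:ℝ)/m) := by positivity
  have hRHS : (2:ℝ)^(2*k) * ((((m:ℝ)/n)⁻¹) ^ m * (((((2*k : ℕ)):ℝ)/n)⁻¹) ^ (2*k)) /
      (8*(k:ℝ)*Real.sqrt ((m:ℝ)/n)) =
      (n:ℝ)^n/((m:ℝ)^m*(k:ℝ)^(2*k)) * Real.sqrt ((n:ℝ)/m)/(8*(k:ℝ)) := by
    rw [hsr]
    push_cast
    rw [hn2]
    field_simp
    rw [div_pow, div_pow, mul_pow, pow_add]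
    field_simp
  rw [hpow, hRHS]
  exact main_ineq n k m hk hm hn2
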